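/- The free medial quandle on a set X is isomorphic to the subquandle Q of the affine quandle Aff(⊕_{x ∈ X∖{z}} ℤ[t,t^{-1}], t) consisting of those elements a with Λ(a) = e_i for some i ∈ X, where Λ is induced by the evaluation t ↦ 1; equivalently Q = {a : a ≡ e_i mod (1−t) for some i ∈ X}. Moreover Q is generated by {e_i : i ∈ X}. -/

import Mathlib

open LaurentPolynomial

/-- The standard basis vectors `e_i` of `⊕_{x ∈ X∖{z}} ℤ[t,t⁻¹]`, with `e_z = 0`. -/
noncomputable def affMQ.e {X : Type*} [DecidableEq X] (z : X) (i : X) :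
    {x : X // x ≠ z} →₀ LaurentPolynomial ℤ :=
  if h : i = z then 0 else Finsupp.single ⟨i, h⟩ 1

/-- The affine quandle operation `a * b = (1-t)·a + t·b` on `⊕_{x ∈ X∖{z}} ℤ[t,t⁻¹]`. -/
noncomputable def affMQ.op {X : Type*} [DecidableEq X] (z : X)
    (a b : {x : X // x ≠ z} →₀ LaurentPolynomial ℤ) :
    {x : X // x ≠ z} →₀ LaurentPolynomial ℤ :=
  ((1 - T 1 : LaurentPolynomial ℤ)) • a + (T 1 : LaurentPolynomial ℤ) • b

/-- The left division `a \ b = (1-t⁻¹)·a + t⁻¹·b` in the affine quandle. -/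
noncomputable def affMQ.ld {X : Type*} [DecidableEq X] (z : X)
    (a b : {x : X // x ≠ z} →₀ LaurentPolynomial ℤ) :
    {x : X // x ≠ z} →₀ LaurentPolynomial ℤ :=
  ((1 - T (-1) : LaurentPolynomial ℤ)) • a + (T (-1) : LaurentPolynomial ℤ) • b

/-- The subset `S = {a : a ≡ e_i mod (1-t) for some i ∈ X}` of the affine quandle
`Aff(⊕_{x ∈ X∖{z}} ℤ[t,t⁻¹], t)` (equivalently, those `a` with `Λ(a) = e_i` for the
evaluation `t ↦ 1`). -/
def affMQ.S {X : Type*} [DecidableEq X] (z : X) :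
    Set ({x : X // x ≠ z} →₀ LaurentPolynomial ℤ) :=
  {a | ∃ (i : X) (m : {x : X // x ≠ z} →₀ LaurentPolynomial ℤ),
    a = affMQ.e z i + ((1 - T 1 : LaurentPolynomial ℤ)) • m}


namespace affMQaux

structure MedialData (Q : Type) where
  op : Q → Q → Q
  idem : ∀ x, op x x = x
  ldist : ∀ x y w, op x (op y w) = op (op x y) (op x w)
  lq : ∀ x y, ∃! u, op x u = y
  med : ∀ x y u v, op (op x y) (op u v) = op (op x u) (op y v)

variable {Q : Type} (M : MedialData Q)

noncomputable def MedialData.ldiv (x y : Q) : Q := (M.lq x y).choose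

lemma MedialData.op_ldiv (x y : Q) : M.op x (M.ldiv x y) = y := (M.lq x y).choose_spec.1

lemma MedialData.ldiv_op (x y : Q) : M.ldiv x (M.op x y) = y :=
  ((M.lq x (M.op x y)).choose_spec.2 y rfl).symm

noncomputable def MedialData.L (x : Q) : Equiv.Perm Q :=
  ⟨M.op x, M.ldiv x, fun y => M.ldiv_op x y, fun y => M.op_ldiv x y⟩

@[simp] lemma MedialData.L_apply (x y : Q) : M.L x y = M.op x y := rfl

lemma MedialData.L_conj (a b : Q) : M.L (M.op a b) = M.L a * M.L b * (M.L a)⁻¹ := by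
  have h : M.L (M.op a b) * M.L a = M.L a * M.L b := by
    ext w
    simp only [Equiv.Perm.mul_apply, M.L_apply]
    exact (M.ldist a b w).symm
  calc M.L (M.op a b) = M.L (M.op a b) * M.L a * (M.L a)⁻¹ := by group
    _ = M.L a * M.L b * (M.L a)⁻¹ := by rw [h]

lemma MedialData.star (a b c : Q) :
    M.L a * (M.L b)⁻¹ * M.L c = M.L c * (M.L b)⁻¹ * M.L a := by
  have h : ∀ x y u : Q, M.L (M.op x y) * M.L u = M.L (M.op x u) * M.L y := by
    intro x y u
    ext v
    simp only [Equiv.Perm.mul_apply, M.L_apply]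
    exact M.med x y u v
  have h2 := h b a c
  rw [M.L_conj b a, M.L_conj b c] at h2
  have h3 : M.L b * (M.L a * ((M.L b)⁻¹ * M.L c)) = M.L b * (M.L c * ((M.L b)⁻¹ * M.L a)) := by
    calc M.L b * (M.L a * ((M.L b)⁻¹ * M.L c)) = M.L b * M.L a * (M.L b)⁻¹ * M.L c := by group
      _ = M.L b * M.L c * (M.L b)⁻¹ * M.L a := h2
      _ = M.L b * (M.L c * ((M.L b)⁻¹ * M.L a)) := by group
  have h4 := mul_left_cancel h3
  rw [mul_assoc, mul_assoc, h4]

end affMQaux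


namespace affMQaux
open Subgroup
variable {Q : Type} (M : MedialData Q) (z₀ : Q)

noncomputable def MedialData.τ (q : Q) : Equiv.Perm Q := M.L q * (M.L z₀)⁻¹

lemma MedialData.τ_comm (p q : Q) : M.τ z₀ p * M.τ z₀ q = M.τ z₀ q * M.τ z₀ p := by
  unfold MedialData.τ
  have := M.star p z₀ q
  calc M.L p * (M.L z₀)⁻¹ * (M.L q * (M.L z₀)⁻¹)
      = (M.L p * (M.L z₀)⁻¹ * M.L q) * (M.L z₀)⁻¹ := by group
    _ = (M.L q * (M.L z₀)⁻¹ * M.L p) * (M.L z₀)⁻¹ := by rw [this]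
    _ = M.L q * (M.L z₀)⁻¹ * (M.L p * (M.L z₀)⁻¹) := by group

noncomputable def MedialData.H : Subgroup (Equiv.Perm Q) :=
  Subgroup.closure (Set.range (M.τ z₀))

noncomputable def MedialData.Hcomm : CommGroup (M.H z₀) :=
  Subgroup.closureCommGroupOfComm (by
    rintro x ⟨p, rfl⟩ y ⟨q, rfl⟩; exact M.τ_comm z₀ p q)

lemma MedialData.τ_mem (q : Q) : M.τ z₀ q ∈ M.H z₀ :=
  Subgroup.subset_closure ⟨q, rfl⟩

-- conjugation facts
lemma MedialData.conj_τ (q : Q) :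
    M.L z₀ * M.τ z₀ q * (M.L z₀)⁻¹ = M.τ z₀ (M.op z₀ q) := by
  unfold MedialData.τ
  rw [M.L_conj z₀ q]; group

lemma MedialData.conj_τ' (q : Q) :
    (M.L z₀)⁻¹ * M.τ z₀ q * (M.L z₀) = M.τ z₀ (M.ldiv z₀ q) := by
  have h := M.conj_τ z₀ (M.ldiv z₀ q)
  rw [M.op_ldiv] at h
  rw [← h]; group

/-- conjugation by `L z₀` preserves `H`. -/
lemma MedialData.conj_mem {π : Equiv.Perm Q} (hπ : π ∈ M.H z₀) :
    M.L z₀ * π * (M.L z₀)⁻¹ ∈ M.H z₀ := by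
  induction hπ using Subgroup.closure_induction with
  | mem x hx => obtain ⟨p, rfl⟩ := hx; rw [M.conj_τ]; exact M.τ_mem z₀ _
  | one => simpa using (M.H z₀).one_mem
  | mul x y hx hy ihx ihy =>
      have : M.L z₀ * (x * y) * (M.L z₀)⁻¹
          = (M.L z₀ * x * (M.L z₀)⁻¹) * (M.L z₀ * y * (M.L z₀)⁻¹) := by group
      rw [this]; exact (M.H z₀).mul_mem ihx ihy
  | inv x hx ihx =>
      have : M.L z₀ * x⁻¹ * (M.L z₀)⁻¹ = (M.L z₀ * x * (M.L z₀)⁻¹)⁻¹ := by group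
      rw [this]; exact (M.H z₀).inv_mem ihx

lemma MedialData.conj_mem' {π : Equiv.Perm Q} (hπ : π ∈ M.H z₀) :
    (M.L z₀)⁻¹ * π * (M.L z₀) ∈ M.H z₀ := by
  induction hπ using Subgroup.closure_induction with
  | mem x hx => obtain ⟨p, rfl⟩ := hx; rw [M.conj_τ']; exact M.τ_mem z₀ _
  | one => simpa using (M.H z₀).one_mem
  | mul x y hx hy ihx ihy =>
      have : (M.L z₀)⁻¹ * (x * y) * (M.L z₀)
          = ((M.L z₀)⁻¹ * x * (M.L z₀)) * ((M.L z₀)⁻¹ * y * (M.L z₀)) := by group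
      rw [this]; exact (M.H z₀).mul_mem ihx ihy
  | inv x hx ihx =>
      have : (M.L z₀)⁻¹ * x⁻¹ * (M.L z₀) = ((M.L z₀)⁻¹ * x * (M.L z₀))⁻¹ := by group
      rw [this]; exact (M.H z₀).inv_mem ihx

/-- Key lemma (E): `L (π q) = π * L q * π⁻¹` for `π ∈ H`. -/
lemma MedialData.L_of_H {π : Equiv.Perm Q} (hπ : π ∈ M.H z₀) (q : Q) :
    M.L (π q) = π * M.L q * π⁻¹ := by
  induction hπ using Subgroup.closure_induction generalizing q with
  | mem x hx =>
      obtain ⟨p, rfl⟩ := hx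
      unfold MedialData.τ
      have : (M.L p * (M.L z₀)⁻¹) q = M.op p ((M.L z₀)⁻¹ q) := rfl
      rw [this, M.L_conj p]
      have h2 : M.L ((M.L z₀)⁻¹ q) = (M.L z₀)⁻¹ * M.L q * M.L z₀ := by
        have := M.L_conj z₀ ((M.L z₀)⁻¹ q)
        have h3 : M.op z₀ ((M.L z₀)⁻¹ q) = q := by
          have : M.op z₀ ((M.L z₀)⁻¹ q) = M.L z₀ ((M.L z₀)⁻¹ q) := rfl
          rw [this]; simp
        rw [h3] at this
        rw [this]; group
      rw [h2]; group
  | one => simp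
  | mul x y hx hy ihx ihy =>
      have : (x * y) q = x (y q) := rfl
      rw [this, ihx, ihy]; group
  | inv x hx ihx =>
      have h := ihx (x⁻¹ q)
      have hx2 : x (x⁻¹ q) = q := by simp
      rw [hx2] at h
      rw [h]; group

/-- Key lemma (F): for `π ∈ H` and any `q`, `L q * ((L z₀)⁻¹ * π * L z₀) = π * L q`. -/
lemma MedialData.F {π : Equiv.Perm Q} (hπ : π ∈ M.H z₀) (q : Q) :
    M.L q * ((M.L z₀)⁻¹ * π * M.L z₀) = π * M.L q := by
  induction hπ using Subgroup.closure_induction with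
  | mem x hx =>
      obtain ⟨p, rfl⟩ := hx
      unfold MedialData.τ
      have star := M.star q z₀ p
      calc M.L q * ((M.L z₀)⁻¹ * (M.L p * (M.L z₀)⁻¹) * M.L z₀)
          = M.L q * (M.L z₀)⁻¹ * M.L p := by group
        _ = M.L p * (M.L z₀)⁻¹ * M.L q := star
        _ = M.L p * (M.L z₀)⁻¹ * M.L q := rfl
  | one => group
  | mul x y hx hy ihx ihy =>
      have hx' : (M.L z₀)⁻¹ * x * M.L z₀ = (M.L q)⁻¹ * x * M.L q := by
        calc (M.L z₀)⁻¹ * x * M.L z₀ = (M.L q)⁻¹ * (M.L q * ((M.L z₀)⁻¹ * x * M.L z₀)) := by group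
          _ = (M.L q)⁻¹ * (x * M.L q) := by rw [ihx]
          _ = (M.L q)⁻¹ * x * M.L q := by group
      have hy' : (M.L z₀)⁻¹ * y * M.L z₀ = (M.L q)⁻¹ * y * M.L q := by
        calc (M.L z₀)⁻¹ * y * M.L z₀ = (M.L q)⁻¹ * (M.L q * ((M.L z₀)⁻¹ * y * M.L z₀)) := by group
          _ = (M.L q)⁻¹ * (y * M.L q) := by rw [ihy]
          _ = (M.L q)⁻¹ * y * M.L q := by group
      have : (M.L z₀)⁻¹ * (x * y) * M.L z₀
          = ((M.L z₀)⁻¹ * x * M.L z₀) * ((M.L z₀)⁻¹ * y * M.L z₀) := by group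
      rw [this, hx', hy']; group
  | inv x hx ihx =>
      have hx' : (M.L z₀)⁻¹ * x * M.L z₀ = (M.L q)⁻¹ * x * M.L q := by
        calc (M.L z₀)⁻¹ * x * M.L z₀ = (M.L q)⁻¹ * (M.L q * ((M.L z₀)⁻¹ * x * M.L z₀)) := by group
          _ = (M.L q)⁻¹ * (x * M.L q) := by rw [ihx]
          _ = (M.L q)⁻¹ * x * M.L q := by group
      have : (M.L z₀)⁻¹ * x⁻¹ * M.L z₀ = ((M.L z₀)⁻¹ * x * M.L z₀)⁻¹ := by group
      rw [this, hx']; group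

end affMQaux

namespace affMQaux
open LaurentPolynomial Subgroup
variable {Q : Type} (M : MedialData Q) (z₀ : Q) {ι : Type*} (g : ι → Q)

noncomputable def MedialData.σ (x : ι) (k : ℤ) : M.H z₀ :=
  ⟨M.τ z₀ (((M.L z₀) ^ k) (g x)), M.τ_mem z₀ _⟩

noncomputable def MedialData.D :
    (ι →₀ LaurentPolynomial ℤ) →+ Additive (M.H z₀) :=
  letI := M.Hcomm z₀
  Finsupp.liftAddHom fun x =>
    ((Finsupp.liftAddHom fun k =>
      (zmultiplesHom (Additive (M.H z₀))) (Additive.ofMul (M.σ z₀ g x k))).comp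
      (AddMonoidAlgebra.coeffAddEquiv : LaurentPolynomial ℤ ≃+ (ℤ →₀ ℤ)).toAddMonoidHom :
      LaurentPolynomial ℤ →+ Additive (M.H z₀))

lemma MedialData.D_single (x : ι) (k : ℤ) (c : ℤ) :
    M.D z₀ g (Finsupp.single x (AddMonoidAlgebra.single k c : LaurentPolynomial ℤ)) =
      c • Additive.ofMul (M.σ z₀ g x k) := by
  letI := M.Hcomm z₀
  unfold MedialData.D
  exact (Finsupp.liftAddHom_apply_single _ x _).trans
    (Finsupp.liftAddHom_apply_single _ k c)

lemma MedialData.D_single_T (x : ι) (k : ℤ) :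
    M.D z₀ g (Finsupp.single x (T k)) = Additive.ofMul (M.σ z₀ g x k) := by
  have : (T k : LaurentPolynomial ℤ) = (AddMonoidAlgebra.single k 1 : LaurentPolynomial ℤ) := rfl
  rw [this, M.D_single z₀ g x k 1, one_zsmul]

/-- conjugation by `L z₀` as an automorphism of `H`. -/
noncomputable def MedialData.cequiv : M.H z₀ ≃* M.H z₀ where
  toFun h := ⟨M.L z₀ * (h : Equiv.Perm Q) * (M.L z₀)⁻¹, M.conj_mem z₀ h.2⟩
  invFun h := ⟨(M.L z₀)⁻¹ * (h : Equiv.Perm Q) * (M.L z₀), M.conj_mem' z₀ h.2⟩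
  left_inv h := Subtype.ext (by show (M.L z₀)⁻¹ * (M.L z₀ * (h : Equiv.Perm Q) * (M.L z₀)⁻¹) * M.L z₀ = (h : Equiv.Perm Q); group)
  right_inv h := Subtype.ext (by show M.L z₀ * ((M.L z₀)⁻¹ * (h : Equiv.Perm Q) * M.L z₀) * (M.L z₀)⁻¹ = (h : Equiv.Perm Q); group)
  map_mul' a b := Subtype.ext (by
    show M.L z₀ * ((a : Equiv.Perm Q) * (b : Equiv.Perm Q)) * (M.L z₀)⁻¹
      = (M.L z₀ * (a : Equiv.Perm Q) * (M.L z₀)⁻¹) * (M.L z₀ * (b : Equiv.Perm Q) * (M.L z₀)⁻¹)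
    group)

lemma MedialData.cequiv_σ (x : ι) (k : ℤ) :
    M.cequiv z₀ (M.σ z₀ g x k) = M.σ z₀ g x (k + 1) := by
  apply Subtype.ext
  show M.L z₀ * M.τ z₀ ((M.L z₀ ^ k) (g x)) * (M.L z₀)⁻¹ = M.τ z₀ ((M.L z₀ ^ (k+1)) (g x))
  rw [M.conj_τ]
  congr 1
  have : (M.L z₀ ^ (k+1)) = M.L z₀ * M.L z₀ ^ k := by
    rw [add_comm, zpow_add, zpow_one]
  rw [this]
  rfl

/-- `cequiv` as an additive hom of `Additive H`. -/
noncomputable def MedialData.cadd : Additive (M.H z₀) →+ Additive (M.H z₀) :=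
  AddMonoidHom.mk' (fun h => Additive.ofMul (M.cequiv z₀ (Additive.toMul h)))
    (by intro a b; simp [map_mul])

lemma MedialData.D_single' (x : ι) (c : ℤ) (k : ℤ) :
    M.D z₀ g (Finsupp.single x (C c * T k)) = c • Additive.ofMul (M.σ z₀ g x k) := by
  rw [← single_eq_C_mul_T]
  exact M.D_single z₀ g x k c

lemma MedialData.D_T_smul (m : ι →₀ LaurentPolynomial ℤ) :
    M.D z₀ g ((T 1 : LaurentPolynomial ℤ) • m) = M.cadd z₀ (M.D z₀ g m) := by
  letI := M.Hcomm z₀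
  have key : (M.D z₀ g).comp ((smulAddHom (LaurentPolynomial ℤ) _) (T 1))
      = (M.cadd z₀).comp (M.D z₀ g) := by
    apply Finsupp.addHom_ext
    intro x p
    simp only [AddMonoidHom.comp_apply, smulAddHom_apply]
    rw [Finsupp.smul_single']
    induction p using LaurentPolynomial.induction_on' with
    | add p q ihp ihq =>
        rw [mul_add, Finsupp.single_add, Finsupp.single_add, map_add, map_add, map_add,
          ihp, ihq]
    | C_mul_T n a =>
        have h1 : (T 1 : LaurentPolynomial ℤ) * (C a * T n) = C a * T (n+1) := by
          rw [T_mul, mul_T_assoc]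
        rw [h1, M.D_single', M.D_single', map_zsmul]
        congr 1
        show Additive.ofMul (M.σ z₀ g x (n+1)) = Additive.ofMul (M.cequiv z₀ (M.σ z₀ g x n))
        rw [M.cequiv_σ]
  exact DFunLike.congr_fun key m

lemma MedialData.D_Tneg_smul (m : ι →₀ LaurentPolynomial ℤ) :
    M.cadd z₀ (M.D z₀ g ((T (-1) : LaurentPolynomial ℤ) • m)) = M.D z₀ g m := by
  rw [← M.D_T_smul z₀ g, ← mul_smul, ← T_add]
  norm_num

end affMQaux

namespace affMQaux
open LaurentPolynomial
variable {X : Type*} [DecidableEq X] (z : X)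

lemma e_self : affMQ.e z z = 0 := dif_pos rfl

lemma e_ne (x : {x : X // x ≠ z}) : affMQ.e z x.1 = Finsupp.single x 1 := by
  rw [affMQ.e, dif_neg x.2]

/-- Evaluation `t ↦ 1` as algebra hom. -/
noncomputable def evalOne : LaurentPolynomial ℤ →ₐ[ℤ] ℤ :=
  (AddMonoidAlgebra.lift ℤ ℤ ℤ) 1

lemma evalOne_T (k : ℤ) : evalOne (T k) = 1 := by
  show evalOne (AddMonoidAlgebra.single k 1) = 1
  rw [evalOne, AddMonoidAlgebra.lift_single]
  simp

/-- `Λ`, coordinatewise evaluation at 1. -/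
noncomputable def lam : ({x : X // x ≠ z} →₀ LaurentPolynomial ℤ) →+ ({x : X // x ≠ z} →₀ ℤ) :=
  Finsupp.mapRange.addMonoidHom (evalOne.toLinearMap.toAddMonoidHom)

lemma lam_smul (m : {x : X // x ≠ z} →₀ LaurentPolynomial ℤ) :
    lam z ((1 - T 1 : LaurentPolynomial ℤ) • m) = 0 := by
  ext x
  show evalOne ((1 - T 1 : LaurentPolynomial ℤ) • m x) = 0
  rw [smul_eq_mul, map_mul, map_sub, map_one, evalOne_T]
  simp

lemma lam_e (i : X) :
    lam z (affMQ.e z i) = if h : i = z then 0 else Finsupp.single ⟨i, h⟩ 1 := by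
  by_cases h : i = z
  · rw [dif_pos h, affMQ.e, dif_pos h, map_zero]
  · rw [dif_neg h, affMQ.e, dif_neg h]
    show Finsupp.mapRange _ (map_zero _) _ = _
    rw [Finsupp.mapRange_single]
    have h1 : evalOne.toLinearMap.toAddMonoidHom (1 : LaurentPolynomial ℤ) = 1 := map_one evalOne
    rw [h1]

lemma sub_T_ne : (1 - T 1 : LaurentPolynomial ℤ) ≠ 0 := by
  intro h
  have h2 : (T 1 : LaurentPolynomial ℤ) = T 0 := by
    rw [T_zero]; exact (sub_eq_zero.mp h).symm
  have h3 : (AddMonoidAlgebra.single (1:ℤ) (1:ℤ) : LaurentPolynomial ℤ) = AddMonoidAlgebra.single (0:ℤ) (1:ℤ) := h2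
  have := (AddMonoidAlgebra.single_left_inj (one_ne_zero)).mp h3
  norm_num at this

lemma uniq {i j : X} {m n : {x : X // x ≠ z} →₀ LaurentPolynomial ℤ}
    (h : affMQ.e z i + (1 - T 1 : LaurentPolynomial ℤ) • m
       = affMQ.e z j + (1 - T 1 : LaurentPolynomial ℤ) • n) :
    i = j ∧ m = n := by
  have hl := congrArg (lam z) h
  rw [map_add, map_add, lam_smul, lam_smul, add_zero, add_zero, lam_e, lam_e] at hl
  have hij : i = j := by
    by_cases hi : i = z <;> by_cases hj : j = z
    · rw [hi, hj]
    · rw [dif_pos hi, dif_neg hj] at hl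
      exact absurd hl.symm (fun hh => (one_ne_zero (α := ℤ)) (Finsupp.single_eq_zero.mp hh))
    · rw [dif_neg hi, dif_pos hj] at hl
      exact absurd hl (fun hh => (one_ne_zero (α := ℤ)) (Finsupp.single_eq_zero.mp hh))
    · rw [dif_neg hi, dif_neg hj] at hl
      have := (Finsupp.single_left_inj (one_ne_zero)).mp hl
      exact congrArg Subtype.val this
  refine ⟨hij, ?_⟩
  rw [hij] at h
  have h2 : (1 - T 1 : LaurentPolynomial ℤ) • m = (1 - T 1 : LaurentPolynomial ℤ) • n :=
    add_left_cancel h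
  ext x k
  have h3 := congrArg (fun f => f x) h2
  simp only [Finsupp.smul_apply, smul_eq_mul] at h3
  have h4 := mul_left_cancel₀ (sub_T_ne) h3
  rw [h4]

end affMQaux

namespace affMQaux
variable {Q : Type} (M : MedialData Q) (z₀ : Q)

lemma MedialData.ldiv_self (q : Q) : M.ldiv q q = q := by
  have h := M.ldiv_op q q
  rwa [M.idem q] at h

lemma MedialData.L_inv_apply (q y : Q) : ((M.L q)⁻¹ : Equiv.Perm Q) y = M.ldiv q y := rfl

lemma MedialData.keyPerm {P1 : Equiv.Perm Q} (h1 : P1 ∈ M.H z₀) (P2 : Equiv.Perm Q)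
    (qi qj : Q) :
    M.τ z₀ qi * (P1 * (M.L z₀ * P1 * (M.L z₀)⁻¹)⁻¹) * (M.L z₀ * P2 * (M.L z₀)⁻¹)
        * (M.τ z₀ qj)⁻¹
      = M.L qi * ((M.L z₀)⁻¹ * P1 * M.L z₀) * (P1⁻¹ * P2 * (M.L qj)⁻¹) * (M.L z₀ * (M.L z₀)⁻¹) := by
  unfold MedialData.τ; group

lemma MedialData.keyPerm2 {P1 : Equiv.Perm Q} (h1 : P1 ∈ M.H z₀) (P2 : Equiv.Perm Q)
    (qi qj : Q) :
    M.τ z₀ qi * (P1 * (M.L z₀ * P1 * (M.L z₀)⁻¹)⁻¹) * (M.L z₀ * P2 * (M.L z₀)⁻¹)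
        * (M.τ z₀ qj)⁻¹
      = P1 * M.L qi * P1⁻¹ * P2 * (M.L qj)⁻¹ := by
  rw [M.keyPerm z₀ h1 P2 qi qj, M.F z₀ h1 qi]
  group

end affMQaux

namespace affMQaux
open LaurentPolynomial
variable {X : Type*} [DecidableEq X] (z : X) {Q : Type} (M : MedialData Q) (ψ : X → Q)

open Classical in
noncomputable def Psi : ({x : X // x ≠ z} →₀ LaurentPolynomial ℤ) → Q := fun a =>
  if h : ∃ (i : X) (m : {x : X // x ≠ z} →₀ LaurentPolynomial ℤ),
      a = affMQ.e z i + ((1 - T 1 : LaurentPolynomial ℤ)) • m then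
    ((Additive.toMul (M.D (ψ z) (fun x : {x : X // x ≠ z} => ψ x.1) h.choose_spec.choose)
      : M.H (ψ z)) : Equiv.Perm Q) (ψ h.choose)
  else ψ z

lemma Psi_spec (i : X) (m : {x : X // x ≠ z} →₀ LaurentPolynomial ℤ) :
    Psi z M ψ (affMQ.e z i + ((1 - T 1 : LaurentPolynomial ℤ)) • m)
      = ((Additive.toMul (M.D (ψ z) (fun x : {x : X // x ≠ z} => ψ x.1) m)
          : M.H (ψ z)) : Equiv.Perm Q) (ψ i) := by
  have hmem : ∃ (j : X) (n : {x : X // x ≠ z} →₀ LaurentPolynomial ℤ),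
      affMQ.e z i + ((1 - T 1 : LaurentPolynomial ℤ)) • m
        = affMQ.e z j + ((1 - T 1 : LaurentPolynomial ℤ)) • n := ⟨i, m, rfl⟩
  rw [Psi, dif_pos hmem]
  obtain ⟨hij, hmn⟩ := uniq z hmem.choose_spec.choose_spec
  rw [← hmn, ← hij]

lemma D_e (i : X) :
    M.D (ψ z) (fun x : {x : X // x ≠ z} => ψ x.1) (affMQ.e z i)
      = Additive.ofMul (⟨M.τ (ψ z) (ψ i), M.τ_mem (ψ z) (ψ i)⟩ : M.H (ψ z)) := by
  by_cases h : i = z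
  · rw [h, e_self, map_zero]
    have hτ : M.τ (ψ z) (ψ z) = 1 := by
      unfold MedialData.τ; group
    have : (⟨M.τ (ψ z) (ψ z), M.τ_mem (ψ z) (ψ z)⟩ : M.H (ψ z)) = 1 := Subtype.ext hτ
    rw [this]
    rfl
  · have he : affMQ.e z i = Finsupp.single (⟨i, h⟩ : {x : X // x ≠ z}) (T 0) := by
      rw [affMQ.e, dif_neg h, T_zero]
    have hσ : M.σ (ψ z) (fun x : {x : X // x ≠ z} => ψ x.1) ⟨i, h⟩ 0
        = (⟨M.τ (ψ z) (ψ i), M.τ_mem (ψ z) (ψ i)⟩ : M.H (ψ z)) := by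
      apply Subtype.ext
      show M.τ (ψ z) ((M.L (ψ z) ^ (0:ℤ)) (ψ i)) = M.τ (ψ z) (ψ i)
      rw [zpow_zero]
      rfl
    rw [he, MedialData.D_single_T, hσ]

/-- coercion computation for `cadd`. -/
lemma cadd_coe (x : Additive (M.H (ψ z))) :
    ((Additive.toMul (M.cadd (ψ z) x) : M.H (ψ z)) : Equiv.Perm Q)
      = M.L (ψ z) * ((Additive.toMul x : M.H (ψ z)) : Equiv.Perm Q) * (M.L (ψ z))⁻¹ := rfl

lemma Psi_e (i : X) : Psi z M ψ (affMQ.e z i) = ψ i := by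
  have h0 : affMQ.e z i = affMQ.e z i + ((1 - T 1 : LaurentPolynomial ℤ)) • (0 : {x : X // x ≠ z} →₀ LaurentPolynomial ℤ) := by
    rw [smul_zero, add_zero]
  rw [h0, Psi_spec, map_zero]
  rfl

lemma Psi_op (a b : {x : X // x ≠ z} →₀ LaurentPolynomial ℤ)
    (ha : a ∈ affMQ.S z) (hb : b ∈ affMQ.S z) :
    Psi z M ψ (affMQ.op z a b) = M.op (Psi z M ψ a) (Psi z M ψ b) := by
  obtain ⟨i, m, rfl⟩ := ha
  obtain ⟨j, n, rfl⟩ := hb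
  have hop : affMQ.op z (affMQ.e z i + ((1 - T 1 : LaurentPolynomial ℤ)) • m)
      (affMQ.e z j + ((1 - T 1 : LaurentPolynomial ℤ)) • n)
    = affMQ.e z j + ((1 - T 1 : LaurentPolynomial ℤ)) •
        (affMQ.e z i + ((1 - T 1 : LaurentPolynomial ℤ)) • m + (T 1 : LaurentPolynomial ℤ) • n
          - affMQ.e z j) := by
    unfold affMQ.op
    module
  rw [hop, Psi_spec, Psi_spec, Psi_spec]
  have hsub : ((1 - T 1 : LaurentPolynomial ℤ)) • m = m - (T 1 : LaurentPolynomial ℤ) • m := by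
    rw [sub_smul, one_smul]
  have hD : M.D (ψ z) (fun x : {x : X // x ≠ z} => ψ x.1)
        (affMQ.e z i + ((1 - T 1 : LaurentPolynomial ℤ)) • m
          + (T 1 : LaurentPolynomial ℤ) • n - affMQ.e z j)
      = M.D (ψ z) (fun x : {x : X // x ≠ z} => ψ x.1) (affMQ.e z i)
        + (M.D (ψ z) (fun x : {x : X // x ≠ z} => ψ x.1) m
            - M.cadd (ψ z) (M.D (ψ z) (fun x : {x : X // x ≠ z} => ψ x.1) m))
        + M.cadd (ψ z) (M.D (ψ z) (fun x : {x : X // x ≠ z} => ψ x.1) n)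
        - M.D (ψ z) (fun x : {x : X // x ≠ z} => ψ x.1) (affMQ.e z j) := by
    rw [map_sub, map_add, map_add, M.D_T_smul, hsub, map_sub, M.D_T_smul]
  have hcadd : ∀ x : Additive (M.H (ψ z)),
      ((Additive.toMul (M.cadd (ψ z) x) : M.H (ψ z)) : Equiv.Perm Q)
        = M.L (ψ z) * ((Additive.toMul x : M.H (ψ z)) : Equiv.Perm Q) * (M.L (ψ z))⁻¹ :=
    fun _ => rfl
  have hmem1 : ((Additive.toMul (M.D (ψ z) (fun x : {x : X // x ≠ z} => ψ x.1) m)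
      : M.H (ψ z)) : Equiv.Perm Q) ∈ M.H (ψ z) :=
    (Additive.toMul (M.D (ψ z) (fun x : {x : X // x ≠ z} => ψ x.1) m)).2
  rw [hD, D_e, D_e, toMul_sub, toMul_add, toMul_add, toMul_sub, toMul_ofMul, toMul_ofMul]
  simp only [div_eq_mul_inv, MulMemClass.coe_mul, InvMemClass.coe_inv, hcadd]
  rw [M.keyPerm2 (ψ z) hmem1
    ((Additive.toMul (M.D (ψ z) (fun x : {x : X // x ≠ z} => ψ x.1) n) : M.H (ψ z)) : Equiv.Perm Q)
    (ψ i) (ψ j)]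
  have hL := M.L_of_H (ψ z) hmem1 (ψ i)
  have hrfl : M.op (((Additive.toMul (M.D (ψ z) (fun x : {x : X // x ≠ z} => ψ x.1) m)
        : M.H (ψ z)) : Equiv.Perm Q) (ψ i))
      (((Additive.toMul (M.D (ψ z) (fun x : {x : X // x ≠ z} => ψ x.1) n)
        : M.H (ψ z)) : Equiv.Perm Q) (ψ j))
    = M.L (((Additive.toMul (M.D (ψ z) (fun x : {x : X // x ≠ z} => ψ x.1) m)
        : M.H (ψ z)) : Equiv.Perm Q) (ψ i))
      (((Additive.toMul (M.D (ψ z) (fun x : {x : X // x ≠ z} => ψ x.1) n)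
        : M.H (ψ z)) : Equiv.Perm Q) (ψ j)) := rfl
  rw [hrfl, hL]
  simp only [Equiv.Perm.mul_apply]
  rw [M.L_inv_apply, M.ldiv_self]

end affMQaux

namespace affMQaux
open LaurentPolynomial
variable {X : Type*} [DecidableEq X] (z : X)

lemma huv : (T 1 : LaurentPolynomial ℤ) * T (-1) = 1 := by
  rw [← T_add]; norm_num

lemma S_op {a b : {x : X // x ≠ z} →₀ LaurentPolynomial ℤ}
    (ha : a ∈ affMQ.S z) (hb : b ∈ affMQ.S z) : affMQ.op z a b ∈ affMQ.S z := by
  obtain ⟨i, m, rfl⟩ := ha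
  obtain ⟨j, n, rfl⟩ := hb
  refine ⟨j, affMQ.e z i + ((1 - T 1 : LaurentPolynomial ℤ)) • m
    + (T 1 : LaurentPolynomial ℤ) • n - affMQ.e z j, ?_⟩
  unfold affMQ.op
  module

lemma S_ld {a b : {x : X // x ≠ z} →₀ LaurentPolynomial ℤ}
    (ha : a ∈ affMQ.S z) (hb : b ∈ affMQ.S z) : affMQ.ld z a b ∈ affMQ.S z := by
  obtain ⟨i, m, rfl⟩ := ha
  obtain ⟨j, n, rfl⟩ := hb
  refine ⟨j, (T (-1) : LaurentPolynomial ℤ) •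
    (affMQ.e z j - (affMQ.e z i + ((1 - T 1 : LaurentPolynomial ℤ)) • m) + n), ?_⟩
  unfold affMQ.ld
  have h := huv
  match_scalars <;>
    first
    | ring1
    | linear_combination h
    | linear_combination -h
    | linear_combination (1 - T 1 : LaurentPolynomial ℤ) * h
    | linear_combination (-(1 - T 1 : LaurentPolynomial ℤ)) * h
    | linear_combination (T (k:ℤ) * (1 - T 1) : LaurentPolynomial ℤ) * h
    | linear_combination (-(T (k:ℤ) * (1 - T 1) : LaurentPolynomial ℤ)) * h
    | linear_combination (T (-(k:ℤ)) * (1 - T 1) : LaurentPolynomial ℤ) * h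
    | linear_combination (-(T (-(k:ℤ)) * (1 - T 1) : LaurentPolynomial ℤ)) * h

lemma op_ld (a b : {x : X // x ≠ z} →₀ LaurentPolynomial ℤ) :
    affMQ.op z a (affMQ.ld z a b) = b := by
  unfold affMQ.op affMQ.ld
  have h := huv
  match_scalars <;>
    first
    | ring1
    | linear_combination h
    | linear_combination -h
    | linear_combination (1 - T 1 : LaurentPolynomial ℤ) * h
    | linear_combination (-(1 - T 1 : LaurentPolynomial ℤ)) * h
    | linear_combination (T (k:ℤ) * (1 - T 1) : LaurentPolynomial ℤ) * h
    | linear_combination (-(T (k:ℤ) * (1 - T 1) : LaurentPolynomial ℤ)) * h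
    | linear_combination (T (-(k:ℤ)) * (1 - T 1) : LaurentPolynomial ℤ) * h
    | linear_combination (-(T (-(k:ℤ)) * (1 - T 1) : LaurentPolynomial ℤ)) * h

section gen
variable (T' : Set ({x : X // x ≠ z} →₀ LaurentPolynomial ℤ))
  (hTe : ∀ i : X, affMQ.e z i ∈ T')
  (hTcl : ∀ a b, a ∈ T' → b ∈ T' → affMQ.op z a b ∈ T' ∧ affMQ.ld z a b ∈ T')

include hTe hTcl

lemma gen4 (k : ℤ) : ∀ (x : {x : X // x ≠ z}), ∀ b ∈ T',
    (b + ((T k * (1 - T 1) : LaurentPolynomial ℤ)) • Finsupp.single x (1 : LaurentPolynomial ℤ) ∈ T')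
    ∧ (b - ((T k * (1 - T 1) : LaurentPolynomial ℤ)) • Finsupp.single x (1 : LaurentPolynomial ℤ) ∈ T') := by
  have h := huv
  induction k using Int.induction_on with
  | zero =>
      intro x b hb
      constructor
      · have h1 := (hTcl _ _ (hTe z) hb).2
        have h2 := (hTcl _ _ (hTe x.1) h1).1
        have heq : affMQ.op z (affMQ.e z x.1) (affMQ.ld z (affMQ.e z z) b)
            = b + ((T 0 * (1 - T 1) : LaurentPolynomial ℤ)) • Finsupp.single x (1 : LaurentPolynomial ℤ) := by
          rw [e_ne, e_self, T_zero]
          unfold affMQ.op affMQ.ld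
          match_scalars <;>
            first
            | ring1
            | linear_combination h
            | linear_combination -h
            | linear_combination (1 - T 1 : LaurentPolynomial ℤ) * h
            | linear_combination (-(1 - T 1 : LaurentPolynomial ℤ)) * h
            | linear_combination (T (k:ℤ) * (1 - T 1) : LaurentPolynomial ℤ) * h
            | linear_combination (-(T (k:ℤ) * (1 - T 1) : LaurentPolynomial ℤ)) * h
            | linear_combination (T (-(k:ℤ)) * (1 - T 1) : LaurentPolynomial ℤ) * h
            | linear_combination (-(T (-(k:ℤ)) * (1 - T 1) : LaurentPolynomial ℤ)) * h
        rwa [heq] at h2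
      · have h1 := (hTcl _ _ (hTe x.1) hb).2
        have h2 := (hTcl _ _ (hTe z) h1).1
        have heq : affMQ.op z (affMQ.e z z) (affMQ.ld z (affMQ.e z x.1) b)
            = b - ((T 0 * (1 - T 1) : LaurentPolynomial ℤ)) • Finsupp.single x (1 : LaurentPolynomial ℤ) := by
          rw [e_ne, e_self, T_zero]
          unfold affMQ.op affMQ.ld
          match_scalars <;>
            first
            | ring1
            | linear_combination h
            | linear_combination -h
            | linear_combination (1 - T 1 : LaurentPolynomial ℤ) * h
            | linear_combination (-(1 - T 1 : LaurentPolynomial ℤ)) * h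
            | linear_combination (T (k:ℤ) * (1 - T 1) : LaurentPolynomial ℤ) * h
            | linear_combination (-(T (k:ℤ) * (1 - T 1) : LaurentPolynomial ℤ)) * h
            | linear_combination (T (-(k:ℤ)) * (1 - T 1) : LaurentPolynomial ℤ) * h
            | linear_combination (-(T (-(k:ℤ)) * (1 - T 1) : LaurentPolynomial ℤ)) * h
        rwa [heq] at h2
  | succ k ih =>
      intro x b hb
      have hb1 := (hTcl _ _ (hTe z) hb).2
      constructor
      · have h1 := (ih x _ hb1).1
        have h2 := (hTcl _ _ (hTe z) h1).1
        have heq : affMQ.op z (affMQ.e z z) (affMQ.ld z (affMQ.e z z) b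
              + ((T (k:ℤ) * (1 - T 1) : LaurentPolynomial ℤ)) • Finsupp.single x (1 : LaurentPolynomial ℤ))
            = b + ((T ((k:ℤ)+1) * (1 - T 1) : LaurentPolynomial ℤ)) • Finsupp.single x (1 : LaurentPolynomial ℤ) := by
          rw [e_self, T_add]
          unfold affMQ.op affMQ.ld
          match_scalars <;>
            first
            | ring1
            | linear_combination h
            | linear_combination -h
            | linear_combination (1 - T 1 : LaurentPolynomial ℤ) * h
            | linear_combination (-(1 - T 1 : LaurentPolynomial ℤ)) * h
            | linear_combination (T (k:ℤ) * (1 - T 1) : LaurentPolynomial ℤ) * h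
            | linear_combination (-(T (k:ℤ) * (1 - T 1) : LaurentPolynomial ℤ)) * h
            | linear_combination (T (-(k:ℤ)) * (1 - T 1) : LaurentPolynomial ℤ) * h
            | linear_combination (-(T (-(k:ℤ)) * (1 - T 1) : LaurentPolynomial ℤ)) * h
        rwa [heq] at h2
      · have h1 := (ih x _ hb1).2
        have h2 := (hTcl _ _ (hTe z) h1).1
        have heq : affMQ.op z (affMQ.e z z) (affMQ.ld z (affMQ.e z z) b
              - ((T (k:ℤ) * (1 - T 1) : LaurentPolynomial ℤ)) • Finsupp.single x (1 : LaurentPolynomial ℤ))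
            = b - ((T ((k:ℤ)+1) * (1 - T 1) : LaurentPolynomial ℤ)) • Finsupp.single x (1 : LaurentPolynomial ℤ) := by
          rw [e_self, T_add]
          unfold affMQ.op affMQ.ld
          match_scalars <;>
            first
            | ring1
            | linear_combination h
            | linear_combination -h
            | linear_combination (1 - T 1 : LaurentPolynomial ℤ) * h
            | linear_combination (-(1 - T 1 : LaurentPolynomial ℤ)) * h
            | linear_combination (T (k:ℤ) * (1 - T 1) : LaurentPolynomial ℤ) * h
            | linear_combination (-(T (k:ℤ) * (1 - T 1) : LaurentPolynomial ℤ)) * h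
            | linear_combination (T (-(k:ℤ)) * (1 - T 1) : LaurentPolynomial ℤ) * h
            | linear_combination (-(T (-(k:ℤ)) * (1 - T 1) : LaurentPolynomial ℤ)) * h
        rwa [heq] at h2
  | pred k ih =>
      intro x b hb
      have hb1 := (hTcl _ _ (hTe z) hb).1
      have hT : (T (-(k:ℤ) - 1) : LaurentPolynomial ℤ) = T (-1) * T (-(k:ℤ)) := by
        rw [← T_add]; ring_nf
      constructor
      · have h1 := (ih x _ hb1).1
        have h2 := (hTcl _ _ (hTe z) h1).2
        have heq : affMQ.ld z (affMQ.e z z) (affMQ.op z (affMQ.e z z) b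
              + ((T (-(k:ℤ)) * (1 - T 1) : LaurentPolynomial ℤ)) • Finsupp.single x (1 : LaurentPolynomial ℤ))
            = b + ((T (-(k:ℤ)-1) * (1 - T 1) : LaurentPolynomial ℤ)) • Finsupp.single x (1 : LaurentPolynomial ℤ) := by
          rw [e_self, hT]
          unfold affMQ.op affMQ.ld
          match_scalars <;>
            first
            | ring1
            | linear_combination h
            | linear_combination -h
            | linear_combination (1 - T 1 : LaurentPolynomial ℤ) * h
            | linear_combination (-(1 - T 1 : LaurentPolynomial ℤ)) * h
            | linear_combination (T (k:ℤ) * (1 - T 1) : LaurentPolynomial ℤ) * h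
            | linear_combination (-(T (k:ℤ) * (1 - T 1) : LaurentPolynomial ℤ)) * h
            | linear_combination (T (-(k:ℤ)) * (1 - T 1) : LaurentPolynomial ℤ) * h
            | linear_combination (-(T (-(k:ℤ)) * (1 - T 1) : LaurentPolynomial ℤ)) * h
        rwa [heq] at h2
      · have h1 := (ih x _ hb1).2
        have h2 := (hTcl _ _ (hTe z) h1).2
        have heq : affMQ.ld z (affMQ.e z z) (affMQ.op z (affMQ.e z z) b
              - ((T (-(k:ℤ)) * (1 - T 1) : LaurentPolynomial ℤ)) • Finsupp.single x (1 : LaurentPolynomial ℤ))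
            = b - ((T (-(k:ℤ)-1) * (1 - T 1) : LaurentPolynomial ℤ)) • Finsupp.single x (1 : LaurentPolynomial ℤ) := by
          rw [e_self, hT]
          unfold affMQ.op affMQ.ld
          match_scalars <;>
            first
            | ring1
            | linear_combination h
            | linear_combination -h
            | linear_combination (1 - T 1 : LaurentPolynomial ℤ) * h
            | linear_combination (-(1 - T 1 : LaurentPolynomial ℤ)) * h
            | linear_combination (T (k:ℤ) * (1 - T 1) : LaurentPolynomial ℤ) * h
            | linear_combination (-(T (k:ℤ) * (1 - T 1) : LaurentPolynomial ℤ)) * h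
            | linear_combination (T (-(k:ℤ)) * (1 - T 1) : LaurentPolynomial ℤ) * h
            | linear_combination (-(T (-(k:ℤ)) * (1 - T 1) : LaurentPolynomial ℤ)) * h
        rwa [heq] at h2

lemma gen3 (p : LaurentPolynomial ℤ) : ∀ (x : {x : X // x ≠ z}), ∀ b ∈ T',
    b + (((1 - T 1 : LaurentPolynomial ℤ)) * p) • Finsupp.single x (1 : LaurentPolynomial ℤ) ∈ T' := by
  induction p using LaurentPolynomial.induction_on' with
  | add p q ihp ihq =>
      intro x b hb
      have h1 := ihp x b hb
      have h2 := ihq x _ h1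
      have heq : (b + ((1 - T 1 : LaurentPolynomial ℤ) * p) • Finsupp.single x (1 : LaurentPolynomial ℤ))
            + ((1 - T 1 : LaurentPolynomial ℤ) * q) • Finsupp.single x (1 : LaurentPolynomial ℤ)
          = b + ((1 - T 1 : LaurentPolynomial ℤ) * (p + q)) • Finsupp.single x (1 : LaurentPolynomial ℤ) := by
        module
      rwa [heq] at h2
  | C_mul_T n a =>
      induction a using Int.induction_on with
      | zero =>
          intro x b hb
          have : ((1 - T 1 : LaurentPolynomial ℤ) * (C 0 * T n)) = 0 := by
            rw [map_zero]; ring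
          rw [this, zero_smul, add_zero]
          exact hb
      | succ a ih =>
          intro x b hb
          have h1 := ih x b hb
          have h2 := (gen4 z T' hTe hTcl n x _ h1).1
          have hC : (C ((a:ℤ)+1) : LaurentPolynomial ℤ) = C (a:ℤ) + 1 := by
            rw [map_add, map_one]
          have heq : (b + ((1 - T 1 : LaurentPolynomial ℤ) * (C (a:ℤ) * T n)) • Finsupp.single x (1 : LaurentPolynomial ℤ))
                + ((T n * (1 - T 1) : LaurentPolynomial ℤ)) • Finsupp.single x (1 : LaurentPolynomial ℤ)
              = b + ((1 - T 1 : LaurentPolynomial ℤ) * (C ((a:ℤ)+1) * T n)) • Finsupp.single x (1 : LaurentPolynomial ℤ) := by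
            rw [hC]
            module
          rwa [heq] at h2
      | pred a ih =>
          intro x b hb
          have h1 := ih x b hb
          have h2 := (gen4 z T' hTe hTcl n x _ h1).2
          have hC : (C (-(a:ℤ)-1) : LaurentPolynomial ℤ) = C (-(a:ℤ)) - 1 := by
            rw [map_sub, map_one]
          have heq : (b + ((1 - T 1 : LaurentPolynomial ℤ) * (C (-(a:ℤ)) * T n)) • Finsupp.single x (1 : LaurentPolynomial ℤ))
                - ((T n * (1 - T 1) : LaurentPolynomial ℤ)) • Finsupp.single x (1 : LaurentPolynomial ℤ)
              = b + ((1 - T 1 : LaurentPolynomial ℤ) * (C (-(a:ℤ)-1) * T n)) • Finsupp.single x (1 : LaurentPolynomial ℤ) := by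
            rw [hC]
            module
          rwa [heq] at h2

lemma gen1 (m : {x : X // x ≠ z} →₀ LaurentPolynomial ℤ) : ∀ b ∈ T',
    b + ((1 - T 1 : LaurentPolynomial ℤ)) • m ∈ T' := by
  induction m using Finsupp.induction with
  | zero => intro b hb; rw [smul_zero, add_zero]; exact hb
  | single_add x p f hx hp ih =>
      intro b hb
      have h1 := ih b hb
      have h2 := gen3 z T' hTe hTcl p x _ h1
      have hs : Finsupp.single x p = p • Finsupp.single x (1 : LaurentPolynomial ℤ) := by
        rw [Finsupp.smul_single', mul_one]
      have heq : (b + ((1 - T 1 : LaurentPolynomial ℤ)) • f)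
            + ((1 - T 1 : LaurentPolynomial ℤ) * p) • Finsupp.single x (1 : LaurentPolynomial ℤ)
          = b + ((1 - T 1 : LaurentPolynomial ℤ)) • (Finsupp.single x p + f) := by
        rw [hs]
        module
      rwa [heq] at h2

lemma gen (a : {x : X // x ≠ z} →₀ LaurentPolynomial ℤ) (ha : a ∈ affMQ.S z) : a ∈ T' := by
  obtain ⟨i, m, rfl⟩ := ha
  exact gen1 z T' hTe hTcl m _ (hTe i)

end gen
end affMQaux


/-- The free medial quandle over `X` is (isomorphic to) the subquandle `S` of the affine
quandle `Aff(⊕_{x ∈ X∖{z}} ℤ[t,t⁻¹], t)` of elements congruent to some `e_i` modulo `(1-t)`: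
`S` is a subquandle containing all `e_i`, it is generated by `{e_i : i ∈ X}`, and it has the
universal property of the free medial quandle over `{e_i : i ∈ X}`. -/
theorem free_medial_quandle_as_affine_subquandle {X : Type*} [DecidableEq X] (z : X) :
    (∀ i : X, affMQ.e z i ∈ affMQ.S z) ∧
    (∀ a b, a ∈ affMQ.S z → b ∈ affMQ.S z →
      affMQ.op z a b ∈ affMQ.S z ∧ affMQ.ld z a b ∈ affMQ.S z) ∧
    (∀ T : Set ({x : X // x ≠ z} →₀ LaurentPolynomial ℤ),
      (∀ i : X, affMQ.e z i ∈ T) →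
      (∀ a b, a ∈ T → b ∈ T → affMQ.op z a b ∈ T ∧ affMQ.ld z a b ∈ T) →
      ∀ a ∈ affMQ.S z, a ∈ T) ∧
    (∀ (Q : Type) (opQ : Q → Q → Q),
      (∀ x, opQ x x = x) →
      (∀ x y w, opQ x (opQ y w) = opQ (opQ x y) (opQ x w)) →
      (∀ x y, ∃! u, opQ x u = y) →
      (∀ x y u v, opQ (opQ x y) (opQ u v) = opQ (opQ x u) (opQ y v)) →
      ∀ ψ : X → Q,
        ∃ Ψ : ({x : X // x ≠ z} →₀ LaurentPolynomial ℤ) → Q,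
          (∀ a ∈ affMQ.S z, ∀ b ∈ affMQ.S z, Ψ (affMQ.op z a b) = opQ (Ψ a) (Ψ b)) ∧
          (∀ i : X, Ψ (affMQ.e z i) = ψ i) ∧
          ∀ Ψ' : ({x : X // x ≠ z} →₀ LaurentPolynomial ℤ) → Q,
            (∀ a ∈ affMQ.S z, ∀ b ∈ affMQ.S z, Ψ' (affMQ.op z a b) = opQ (Ψ' a) (Ψ' b)) →
            (∀ i : X, Ψ' (affMQ.e z i) = ψ i) →
            ∀ a ∈ affMQ.S z, Ψ a = Ψ' a) := by
  refine ⟨fun i => ⟨i, 0, by rw [smul_zero, add_zero]⟩, ?_, ?_, ?_⟩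
  · intro a b ha hb
    exact ⟨affMQaux.S_op z ha hb, affMQaux.S_ld z ha hb⟩
  · intro T' hTe hTcl a ha
    exact affMQaux.gen z T' hTe hTcl a ha
  · intro Q opQ idem ldist lq med ψ
    let M : affMQaux.MedialData Q := ⟨opQ, idem, ldist, lq, med⟩
    refine ⟨affMQaux.Psi z M ψ, ?_, ?_, ?_⟩
    · intro a ha b hb
      exact affMQaux.Psi_op z M ψ a b ha hb
    · intro i
      exact affMQaux.Psi_e z M ψ i
    · intro Ψ' hΨ' hΨ'e a ha
      have key : ∀ b ∈ {c | c ∈ affMQ.S z ∧ affMQaux.Psi z M ψ c = Ψ' c}, True := fun _ _ => trivial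
      have hTe : ∀ i : X, affMQ.e z i ∈
          {c | c ∈ affMQ.S z ∧ affMQaux.Psi z M ψ c = Ψ' c} := fun i =>
        ⟨⟨i, 0, by rw [smul_zero, add_zero]⟩, by rw [affMQaux.Psi_e, hΨ'e]⟩
      have hTcl : ∀ a b, a ∈ {c | c ∈ affMQ.S z ∧ affMQaux.Psi z M ψ c = Ψ' c} →
          b ∈ {c | c ∈ affMQ.S z ∧ affMQaux.Psi z M ψ c = Ψ' c} →
          affMQ.op z a b ∈ {c | c ∈ affMQ.S z ∧ affMQaux.Psi z M ψ c = Ψ' c} ∧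
          affMQ.ld z a b ∈ {c | c ∈ affMQ.S z ∧ affMQaux.Psi z M ψ c = Ψ' c} := by
        rintro a b ⟨haS, haeq⟩ ⟨hbS, hbeq⟩
        constructor
        · refine ⟨affMQaux.S_op z haS hbS, ?_⟩
          rw [affMQaux.Psi_op z M ψ a b haS hbS, hΨ' a haS b hbS, haeq, hbeq]
        · refine ⟨affMQaux.S_ld z haS hbS, ?_⟩
          have hldS := affMQaux.S_ld z haS hbS
          have h1 : opQ (Ψ' a) (affMQaux.Psi z M ψ (affMQ.ld z a b)) = Ψ' b := by
            have := affMQaux.Psi_op z M ψ a _ haS hldS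
            rw [affMQaux.op_ld] at this
            rw [← haeq, ← hbeq]
            exact this.symm
          have h2 : opQ (Ψ' a) (Ψ' (affMQ.ld z a b)) = Ψ' b := by
            have := hΨ' a haS _ hldS
            rw [affMQaux.op_ld] at this
            exact this.symm
          obtain ⟨u, hu, huniq⟩ := lq (Ψ' a) (Ψ' b)
          exact (huniq _ h1).trans (huniq _ h2).symm
      exact (affMQaux.gen z _ hTe hTcl a ha).2
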